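/- arXiv:2410.17522 — 5 statements merged into one kernel-verified Lean document; each statement's English description precedes it below -/
import Mathlib

section
/- For every positive integer n, (n+1) D_n s_n + (n+2) D_{n-1} s_{n+1} ≡ 0 (mod 3). -/
def D (n : ℕ) : ℤ :=
  ∑ k ∈ Finset.range (n + 1), (n.choose k : ℤ) * ((n + k).choose k : ℤ)
def littleSchroeder (n : ℕ) : ℤ :=
  ∑ k ∈ Finset.Icc 1 n, ((n.choose k * n.choose (k - 1) / n * 2 ^ (n - k) : ℕ) : ℤ)

lemma sum_choose_mul_choose (n i : ℕ) (hi : i ≤ n) :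
    ∑ k ∈ Finset.range (n + 1), n.choose k * k.choose i = n.choose i * 2 ^ (n - i) := by
  have h1 : ∑ k ∈ Finset.range (n + 1), n.choose k * k.choose i
      = ∑ k ∈ Finset.Ico i (n + 1), n.choose k * k.choose i := by
    refine (Finset.sum_subset ?_ ?_).symm
    · intro x hx; simp only [Finset.mem_Ico, Finset.mem_range] at *; omega
    · intro x hx hx'
      simp only [Finset.mem_range, Finset.mem_Ico, not_and, not_le, not_lt] at *
      rw [Nat.choose_eq_zero_of_lt (by omega : x < i), mul_zero]
  rw [h1, Finset.sum_Ico_eq_sum_range]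
  have h2 : ∀ j ∈ Finset.range (n + 1 - i),
      n.choose (i + j) * (i + j).choose i = n.choose i * (n - i).choose j := by
    intro j hj
    simp only [Finset.mem_range] at hj
    rw [Nat.choose_mul (by omega), Nat.add_sub_cancel_left]
  rw [Finset.sum_congr rfl h2, ← Finset.mul_sum,
    show n + 1 - i = (n - i) + 1 by omega, Nat.sum_range_choose]

lemma D_nat (n : ℕ) :
    ∑ k ∈ Finset.range (n + 1), n.choose k * (n + k).choose k
      = ∑ k ∈ Finset.range (n + 1), n.choose k * n.choose k * 2 ^ (n - k) := by
  have key : ∀ k ∈ Finset.range (n + 1),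
      n.choose k * (n + k).choose k
        = ∑ i ∈ Finset.range (n + 1), n.choose i * (n.choose k * k.choose i) := by
    intro k hk
    simp only [Finset.mem_range] at hk
    rw [Nat.add_choose_eq, Finset.Nat.sum_antidiagonal_eq_sum_range_succ_mk, Finset.mul_sum]
    have hsub : Finset.range (k + 1) ⊆ Finset.range (n + 1) :=
      Finset.range_subset_range.mpr (by omega)
    rw [← Finset.sum_subset hsub (fun i _ hi => ?_)]
    · refine Finset.sum_congr rfl (fun i hi => ?_)
      simp only [Finset.mem_range] at hi
      rw [Nat.choose_symm (by omega : i ≤ k)]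
      ring
    · simp only [Finset.mem_range, not_lt] at hi
      rw [Nat.choose_eq_zero_of_lt (by omega : k < i)]
      ring
  rw [Finset.sum_congr rfl key, Finset.sum_comm]
  refine Finset.sum_congr rfl (fun i hi => ?_)
  simp only [Finset.mem_range] at hi
  rw [← Finset.mul_sum, sum_choose_mul_choose n i (by omega), ← mul_assoc]

lemma D_cast (n : ℕ) :
    D n = ((∑ k ∈ Finset.range (n + 1), n.choose k * (n + k).choose k : ℕ) : ℤ) := by
  unfold D
  push_cast
  rfl

lemma D_zmod {n : ℕ} (hn : Odd n) : ((D n : ℤ) : ZMod 3) = 0 := by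
  have h2 : (2 : ZMod 3) = -1 := by decide
  have hD : ((D n : ℤ) : ZMod 3)
      = ∑ k ∈ Finset.range (n + 1),
          (n.choose k : ZMod 3) * (n.choose k : ZMod 3) * (-1) ^ (n - k) := by
    rw [D_cast n, D_nat n]
    push_cast
    simp only [h2]
  rw [hD]
  refine Finset.sum_involution (fun k _ => n - k) (fun k hk => ?_) (fun k hk _ => ?_)
    (fun k hk => ?_) (fun k hk => ?_)
  · simp only [Finset.mem_range] at hk
    have hkn : k ≤ n := by omega
    rw [Nat.choose_symm hkn, Nat.sub_sub_self hkn]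
    have hpar : (-1 : ZMod 3) ^ (n - k) + (-1) ^ k = 0 := by
      rcases Nat.even_or_odd k with h | h
      · rw [(Nat.Odd.sub_even hkn hn h).neg_one_pow, h.neg_one_pow]; ring
      · rw [(Nat.Odd.sub_odd hn h).neg_one_pow, h.neg_one_pow]; ring
    rw [← mul_add, hpar, mul_zero]
  · simp only [Finset.mem_range] at hk
    obtain ⟨m, hm⟩ := hn
    omega
  · simp only [Finset.mem_range] at *
    omega
  · simp only [Finset.mem_range] at hk
    omega

lemma s_zmod {n : ℕ} (hn : Even n) : ((littleSchroeder n : ℤ) : ZMod 3) = 0 := by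
  have h2 : (2 : ZMod 3) = -1 := by decide
  have hS : ((littleSchroeder n : ℤ) : ZMod 3)
      = ∑ k ∈ Finset.Icc 1 n,
          ((n.choose k * n.choose (k - 1) / n : ℕ) : ZMod 3) * (-1) ^ (n - k) := by
    unfold littleSchroeder
    rw [Int.cast_sum (R := ZMod 3)]
    refine Finset.sum_congr rfl (fun k hk => ?_)
    rw [Int.cast_natCast, Nat.cast_mul, Nat.cast_pow, Nat.cast_ofNat, h2]
  rw [hS]
  refine Finset.sum_involution (fun k _ => n + 1 - k) (fun k hk => ?_) (fun k hk _ => ?_)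
    (fun k hk => ?_) (fun k hk => ?_)
  · simp only [Finset.mem_Icc] at hk
    obtain ⟨hk1, hkn⟩ := hk
    have e1 : n + 1 - k - 1 = n - k := by omega
    have e2 : n + 1 - k = n - (k - 1) := by omega
    have e3 : n - (n - (k - 1)) = k - 1 := by omega
    rw [e1, Nat.choose_symm hkn, e2, e3, Nat.choose_symm (by omega : k - 1 ≤ n),
      Nat.mul_comm (n.choose (k - 1)) (n.choose k)]
    have hpar : (-1 : ZMod 3) ^ (n - k) + (-1) ^ (k - 1) = 0 := by
      rcases Nat.even_or_odd k with h | h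
      · have p1 : Even (n - k) := (Nat.even_sub hkn).mpr (iff_of_true hn h)
        have p2 : Odd (k - 1) := Nat.Even.sub_odd hk1 h odd_one
        rw [p1.neg_one_pow, p2.neg_one_pow]; ring
      · have p1 : Odd (n - k) := Nat.Even.sub_odd hkn hn h
        have p2 : Even (k - 1) := Nat.Odd.sub_odd h odd_one
        rw [p1.neg_one_pow, p2.neg_one_pow]; ring
    rw [← mul_add, hpar, mul_zero]
  · simp only [Finset.mem_Icc] at hk
    obtain ⟨m, hm⟩ := hn
    omega
  · simp only [Finset.mem_Icc] at *
    omega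
  · simp only [Finset.mem_Icc] at hk
    omega

theorem stmt2 (n : ℕ) (hn : 0 < n) :
    ((n : ℤ) + 1) * D n * littleSchroeder n + ((n : ℤ) + 2) * D (n - 1) * littleSchroeder (n + 1)
      ≡ 0 [ZMOD 3] := by
  refine Int.modEq_zero_iff_dvd.mpr ?_
  rcases Nat.even_or_odd n with he | ho
  · have h1 : (3 : ℤ) ∣ littleSchroeder n :=
      (ZMod.intCast_zmod_eq_zero_iff_dvd _ 3).mp (s_zmod he)
    have hodd : Odd (n - 1) := by
      obtain ⟨m, hm⟩ := he
      exact ⟨m - 1, by omega⟩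
    have h2 : (3 : ℤ) ∣ D (n - 1) :=
      (ZMod.intCast_zmod_eq_zero_iff_dvd _ 3).mp (D_zmod hodd)
    exact dvd_add (h1.mul_left _) ((h2.mul_left _).mul_right _)
  · have h1 : (3 : ℤ) ∣ D n :=
      (ZMod.intCast_zmod_eq_zero_iff_dvd _ 3).mp (D_zmod ho)
    have h2 : (3 : ℤ) ∣ littleSchroeder (n + 1) :=
      (ZMod.intCast_zmod_eq_zero_iff_dvd _ 3).mp (s_zmod (ho.add_one))
    exact dvd_add ((h1.mul_left _).mul_right _) (h2.mul_left _)
end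

section
/- For every positive integer n, ∑_{k=1}^n (−1)^{n−k} k^2 D_k D_{k−1} = (n+1) · (3(n+1) D_n^2 + (8+18n) D_{n+1} D_n − 3(n+1) D_{n+1}^2)/36. -/
private def F (n k : ℕ) : ℤ := (n.choose k : ℤ) * ((n + k).choose k : ℤ)

private def H (n k : ℕ) : ℤ :=
  2 * (k : ℤ) ^ 2 * (2 * n + 3) * ((n + 2).choose k : ℤ) * ((n + k).choose k : ℤ)

private lemma habs (m k : ℕ) :
    ((m : ℤ) + 1 - k) * ((m + 1).choose k : ℤ) = ((m : ℤ) + 1) * (m.choose k : ℤ) := by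
  rcases le_or_gt k (m + 1) with h | h
  · have h0 := Nat.choose_mul_succ_eq m k
    have h1 := congrArg (Nat.cast : ℕ → ℤ) h0
    push_cast [Nat.cast_sub h] at h1
    linear_combination -h1
  · rw [Nat.choose_eq_zero_of_lt h, Nat.choose_eq_zero_of_lt (by omega)]
    ring

private lemma hsr (m k : ℕ) :
    ((k : ℤ) + 1) * (m.choose (k + 1) : ℤ) = ((m : ℤ) - k) * (m.choose k : ℤ) := by
  rcases le_or_gt k m with h | h
  · have h0 := Nat.choose_succ_right_eq m k
    have h1 := congrArg (Nat.cast : ℕ → ℤ) h0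
    push_cast [Nat.cast_sub h] at h1
    linear_combination h1
  · rw [Nat.choose_eq_zero_of_lt h, Nat.choose_eq_zero_of_lt (by omega)]
    ring

private lemma perk (n k : ℕ) :
    ((n : ℤ) + 1) * ((n : ℤ) + 2) *
        (((n : ℤ) + 1) * F n k - 3 * (2 * (n : ℤ) + 3) * F (n + 1) k
          + ((n : ℤ) + 2) * F (n + 2) k)
      = H n k - H n (k + 1) := by
  have h1 : ((n : ℤ) + 1 - k) * ((n + 1).choose k : ℤ) = ((n : ℤ) + 1) * (n.choose k : ℤ) :=
    habs n k
  have h2 : ((n : ℤ) + 2 - k) * ((n + 2).choose k : ℤ)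
      = ((n : ℤ) + 2) * ((n + 1).choose k : ℤ) := by
    have := habs (n + 1) k; push_cast at this ⊢; linear_combination this
  have h3 : ((n : ℤ) + 1) * ((n + 1 + k).choose k : ℤ)
      = ((n : ℤ) + k + 1) * ((n + k).choose k : ℤ) := by
    have := habs (n + k) k
    rw [show n + k + 1 = n + 1 + k from by omega] at this
    push_cast at this ⊢; linear_combination this
  have h4 : ((n : ℤ) + 2) * ((n + 2 + k).choose k : ℤ)
      = ((n : ℤ) + k + 2) * ((n + 1 + k).choose k : ℤ) := by
    have := habs (n + k + 1) k
    rw [show n + k + 1 + 1 = n + 2 + k from by omega,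
        show n + k + 1 = n + 1 + k from by omega] at this
    push_cast at this ⊢; linear_combination this
  have h5 : ((k : ℤ) + 1) * ((n + 2).choose (k + 1) : ℤ)
      = ((n : ℤ) + 2 - k) * ((n + 2).choose k : ℤ) := by
    have := hsr (n + 2) k; push_cast at this ⊢; linear_combination this
  have h6 : ((k : ℤ) + 1) * ((n + 1 + k).choose (k + 1) : ℤ)
      = ((n : ℤ) + 1) * ((n + 1 + k).choose k : ℤ) := by
    have := hsr (n + 1 + k) k; push_cast at this ⊢; linear_combination this
  have e1 : ((n : ℤ) + 1) * ((n : ℤ) + 2) * (n.choose k : ℤ) * ((n + k).choose k : ℤ)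
      = ((n : ℤ) + 1 - k) * ((n : ℤ) + 2 - k) * ((n + 2).choose k : ℤ) * ((n + k).choose k : ℤ) := by
    linear_combination (-((n : ℤ) + 2) * ((n + k).choose k : ℤ)) * h1
      + (-((n : ℤ) + 1 - k) * ((n + k).choose k : ℤ)) * h2
  have e2 : ((n : ℤ) + 1) * ((n : ℤ) + 2) * ((n + 1).choose k : ℤ) * ((n + 1 + k).choose k : ℤ)
      = ((n : ℤ) + 2 - k) * ((n : ℤ) + k + 1) * ((n + 2).choose k : ℤ) * ((n + k).choose k : ℤ) := by
    linear_combination (((n : ℤ) + 2) * ((n + 1).choose k : ℤ)) * h3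
      - (((n : ℤ) + k + 1) * ((n + k).choose k : ℤ)) * h2
  have e3 : ((n : ℤ) + 1) * ((n : ℤ) + 2) * ((n + 2).choose k : ℤ) * ((n + 2 + k).choose k : ℤ)
      = ((n : ℤ) + k + 1) * ((n : ℤ) + k + 2) * ((n + 2).choose k : ℤ) * ((n + k).choose k : ℤ) := by
    linear_combination (((n : ℤ) + 1) * ((n + 2).choose k : ℤ)) * h4
      + (((n : ℤ) + k + 2) * ((n + 2).choose k : ℤ)) * h3
  have e4 : ((k : ℤ) + 1) ^ 2 * ((n + 2).choose (k + 1) : ℤ) * ((n + 1 + k).choose (k + 1) : ℤ)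
      = ((n : ℤ) + 1) * ((n : ℤ) + 2 - k) * ((n + 2).choose k : ℤ) * ((n + 1 + k).choose k : ℤ) := by
    linear_combination (((k : ℤ) + 1) * ((n + 1 + k).choose (k + 1) : ℤ)) * h5
      + (((n : ℤ) + 2 - k) * ((n + 2).choose k : ℤ)) * h6
  simp only [F, H]
  rw [show n + (k + 1) = n + 1 + k from by omega]
  push_cast
  linear_combination ((n : ℤ) + 1) * e1 - 3 * (2 * (n : ℤ) + 3) * e2 + ((n : ℤ) + 2) * e3
    + 2 * (2 * (n : ℤ) + 3) * e4
    + 2 * (2 * (n : ℤ) + 3) * ((n : ℤ) + 2 - k) * ((n + 2).choose k : ℤ) * h3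

private lemma Dsum (m N : ℕ) (h : m + 1 ≤ N) : D m = ∑ k ∈ Finset.range N, F m k := by
  rw [show D m = ∑ k ∈ Finset.range (m + 1), F m k from rfl]
  exact Finset.sum_subset (Finset.range_subset_range.mpr h) fun k _ hk => by
    have hk' : m < k := by simpa using hk
    simp [F, Nat.choose_eq_zero_of_lt hk']

private lemma Drec (n : ℕ) :
    ((n : ℤ) + 2) * D (n + 2) = 3 * (2 * (n : ℤ) + 3) * D (n + 1) - ((n : ℤ) + 1) * D n := by
  have key : ∑ k ∈ Finset.range (n + 3), (H n k - H n (k + 1)) = 0 := by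
    rw [Finset.sum_range_sub' (H n)]
    have hz : (n + 2).choose (n + 3) = 0 := Nat.choose_eq_zero_of_lt (by omega)
    simp [H, hz]
  have h0 : ((n : ℤ) + 1) * ((n : ℤ) + 2) *
      (((n : ℤ) + 1) * D n - 3 * (2 * (n : ℤ) + 3) * D (n + 1) + ((n : ℤ) + 2) * D (n + 2)) = 0 := by
    calc ((n : ℤ) + 1) * ((n : ℤ) + 2) *
        (((n : ℤ) + 1) * D n - 3 * (2 * (n : ℤ) + 3) * D (n + 1) + ((n : ℤ) + 2) * D (n + 2))
        = ∑ k ∈ Finset.range (n + 3), ((n : ℤ) + 1) * ((n : ℤ) + 2) *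
            (((n : ℤ) + 1) * F n k - 3 * (2 * (n : ℤ) + 3) * F (n + 1) k
              + ((n : ℤ) + 2) * F (n + 2) k) := by
          rw [Dsum n (n + 3) (by omega), Dsum (n + 1) (n + 3) (by omega),
            Dsum (n + 2) (n + 3) (by omega), Finset.mul_sum, Finset.mul_sum, Finset.mul_sum,
            ← Finset.sum_sub_distrib, ← Finset.sum_add_distrib, Finset.mul_sum]
      _ = ∑ k ∈ Finset.range (n + 3), (H n k - H n (k + 1)) :=
          Finset.sum_congr rfl fun k _ => perk n k
      _ = 0 := key
  have hne : ((n : ℤ) + 1) * ((n : ℤ) + 2) ≠ 0 := by positivity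
  have h1 := (mul_eq_zero.mp h0).resolve_left hne
  linarith

theorem stmt3 (n : ℕ) (hn : 0 < n) :
    36 * ∑ k ∈ Finset.Icc 1 n, (-1 : ℤ) ^ (n - k) * k ^ 2 * D k * D (k - 1)
      = ((n : ℤ) + 1) * (3 * ((n : ℤ) + 1) * D n ^ 2 + (8 + 18 * n) * D (n + 1) * D n
          - 3 * ((n : ℤ) + 1) * D (n + 1) ^ 2) := by
  induction n, hn using Nat.le_induction with
  | base =>
    norm_num [Finset.Icc_self, Finset.sum_singleton, D, Finset.sum_range_succ, Nat.choose]
  | succ n hn ih =>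
    have hsplit : ∑ k ∈ Finset.Icc 1 (n + 1), (-1 : ℤ) ^ (n + 1 - k) * k ^ 2 * D k * D (k - 1)
        = ((n : ℤ) + 1) ^ 2 * D (n + 1) * D n
          - ∑ k ∈ Finset.Icc 1 n, (-1 : ℤ) ^ (n - k) * k ^ 2 * D k * D (k - 1) := by
      rw [Finset.sum_Icc_succ_top (by omega : 1 ≤ n + 1)]
      have hcongr : ∀ k ∈ Finset.Icc 1 n,
          (-1 : ℤ) ^ (n + 1 - k) * k ^ 2 * D k * D (k - 1)
            = -((-1 : ℤ) ^ (n - k) * k ^ 2 * D k * D (k - 1)) := by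
        intro k hk
        have hk2 := (Finset.mem_Icc.mp hk).2
        rw [show n + 1 - k = (n - k) + 1 from by omega, pow_succ]
        ring
      rw [Finset.sum_congr rfl hcongr, Finset.sum_neg_distrib]
      simp only [Nat.add_sub_cancel, Nat.sub_self, pow_zero]
      push_cast
      ring
    have hrec := Drec n
    have hne : ((n : ℤ) + 2) ^ 2 ≠ 0 := by positivity
    apply mul_left_cancel₀ hne
    push_cast at hsplit ⊢
    linear_combination 36 * ((n : ℤ) + 2) ^ 2 * hsplit - ((n : ℤ) + 2) ^ 2 * ih
      + (3 * ((n : ℤ) + 2) ^ 3 * D (n + 2) + ((n : ℤ) + 2) ^ 2 * D (n + 1)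
          - 3 * ((n : ℤ) + 1) * ((n : ℤ) + 2) ^ 2 * D n) * hrec
end

section
/- For any odd prime p, the central Delannoy numbers satisfy D_{p−1} ≡ 1 (mod p) and D_p ≡ 3 (mod p). -/
theorem stmt10 (p : ℕ) (hp : p.Prime) (hp2 : Odd p) :
    D (p - 1) ≡ 1 [ZMOD p] ∧ D p ≡ 3 [ZMOD p] := by
  haveI := Fact.mk hp
  have hp1 : 1 < p := hp.one_lt
  constructor
  · rw [← ZMod.intCast_eq_intCast_iff]
    unfold D
    push_cast
    rw [Nat.sub_add_cancel hp1.le]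
    rw [Finset.sum_eq_single_of_mem 0 (Finset.mem_range.mpr (by omega))]
    · simp
    · intro k hk hk0
      have hkp : k < p := Finset.mem_range.mp hk
      have hdvd : p ∣ (p - 1 + k).choose k :=
        hp.dvd_choose hkp (by omega) (by omega)
      have : ((p - 1 + k).choose k : ZMod p) = 0 :=
        (ZMod.natCast_eq_zero_iff _ _).mpr hdvd
      rw [this, mul_zero]
  · rw [← ZMod.intCast_eq_intCast_iff]
    unfold D
    push_cast
    rw [Finset.sum_range_succ]
    rw [Finset.sum_eq_single_of_mem 0 (Finset.mem_range.mpr (by omega))]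
    · have h2p : ((p + p).choose p : ZMod p) = 2 := by
        have := Choose.choose_modEq_choose_mod_mul_choose_div (p := p) (n := p + p) (k := p)
        rw [← ZMod.intCast_eq_intCast_iff] at this
        push_cast at this
        have hmod : (p + p) % p = 0 := by simp [Nat.add_mod]
        have hdiv : (p + p) / p = 2 := by rw [← two_mul, Nat.mul_div_cancel _ (by omega)]
        rw [hmod, hdiv, Nat.mod_self, Nat.div_self (by omega)] at this
        simpa using this
      simp [h2p]
      ring
    · intro k hk hk0
      have hkp : k < p := Finset.mem_range.mp hk
      have hdvd : p ∣ p.choose k := hp.dvd_choose_self hk0 hkp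
      have : (p.choose k : ZMod p) = 0 :=
        (ZMod.natCast_eq_zero_iff _ _).mpr hdvd
      rw [this, zero_mul]
end

section
/- For every positive integer n, n D_n D_{n−1} = 3 ∑_{j=0}^{n−1} (n−j) C(n+j,2j) C(2j,j)^2 2^j. -/
open Finset

lemma X1q (m k : ℕ) : ((m:ℚ) + 1 - k) * ((m+1).choose k : ℚ) = ((m:ℚ)+1) * (m.choose k : ℚ) := by
  rcases le_or_gt k (m+1) with h | h
  · have h0 := congrArg (fun x : ℕ => (x:ℚ)) (Nat.choose_mul_succ_eq m k)
    push_cast [Nat.cast_sub h] at h0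
    linarith
  · rw [Nat.choose_eq_zero_of_lt h, Nat.choose_eq_zero_of_lt (by omega)]
    simp

lemma X2q (m k : ℕ) : ((m:ℚ)+1) * (m.choose k : ℚ) = ((m+1).choose (k+1) : ℚ) * ((k:ℚ)+1) := by
  have h0 := congrArg (fun x : ℕ => (x:ℚ)) (Nat.add_one_mul_choose_eq m k)
  push_cast at h0
  linarith

lemma X3q (m k : ℕ) : ((m.choose (k+1)) : ℚ) * (k+1) = (m.choose k : ℚ) * ((m:ℚ) - k) := by
  rcases le_or_gt k m with h | h
  · have h0 := congrArg (fun x : ℕ => (x:ℚ)) (Nat.choose_succ_right_eq m k)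
    push_cast [Nat.cast_sub h] at h0
    linarith
  · rw [Nat.choose_eq_zero_of_lt h, Nat.choose_eq_zero_of_lt (by omega)]
    simp

lemma X4q (n : ℕ) : ((n:ℚ)+1) * ((2*n+2).choose (n+1) : ℚ) = 2*(2*(n:ℚ)+1) * ((2*n).choose n : ℚ) := by
  have h := Nat.succ_mul_centralBinom_succ n
  simp only [Nat.centralBinom, show 2*(n+1) = 2*n+2 by omega] at h
  have h0 := congrArg (fun x : ℕ => (x:ℚ)) h
  push_cast at h0
  linarith
lemma X1 (m k : ℕ) : ((m:ℤ) + 1 - k) * ((m+1).choose k : ℤ) = ((m:ℤ)+1) * (m.choose k : ℤ) := by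
  rcases le_or_gt k (m+1) with h | h
  · have h0 := congrArg (fun x : ℕ => (x:ℤ)) (Nat.choose_mul_succ_eq m k)
    push_cast [Nat.cast_sub h] at h0
    linarith
  · rw [Nat.choose_eq_zero_of_lt h, Nat.choose_eq_zero_of_lt (by omega)]
    simp
def bb (m k : ℕ) : ℤ := (m.choose k : ℤ) * ((m + k).choose k : ℤ)
def aa (m j : ℕ) : ℤ := ((m + j).choose (2*j) : ℤ) * ((2*j).choose j : ℤ)^2 * 2^j
def E (m : ℕ) : ℤ := ∑ j ∈ Finset.range (m+1), aa m j
def Rr (m : ℕ) : ℤ := 3 * ∑ j ∈ Finset.range m, ((m : ℤ) - j) * aa m j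

lemma Dbb (n : ℕ) : D n = ∑ k ∈ range (n+1), bb n k := rfl

lemma Dext (n m : ℕ) (h : n + 1 ≤ m) : ∑ k ∈ range m, bb n k = D n := by
  rw [Dbb]
  exact (Finset.sum_subset (Finset.range_subset_range.mpr h) (by
    intro k _ hk
    simp only [Finset.mem_range, not_lt] at hk
    simp [bb, Nat.choose_eq_zero_of_lt (by omega : n < k)])).symm

lemma aa_zero (n j : ℕ) (h : n < j) : aa n j = 0 := by
  simp [aa, Nat.choose_eq_zero_of_lt (by omega : n + j < 2*j)]

lemma Eext (n m : ℕ) (h : n + 1 ≤ m) : ∑ j ∈ range m, aa n j = E n := by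
  rw [E]
  exact (Finset.sum_subset (Finset.range_subset_range.mpr h) (by
    intro j _ hj
    simp only [Finset.mem_range, not_lt] at hj
    exact aa_zero n j (by omega))).symm
def g1 (n : ℕ) : ℕ → ℤ
  | 0 => 0
  | (k+1) => -2*(2*(n:ℤ)+3) * ((n+1).choose k : ℤ) * ((n+1+k).choose k : ℤ)
lemma tw1 (n k : ℕ) (hk : k ≤ n + 2) :
    ((n:ℤ)+2) * bb (n+2) k - 3*(2*(n:ℤ)+3) * bb (n+1) k + ((n:ℤ)+1) * bb n k
      = g1 n (k+1) - g1 n k := by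
  match k with
  | 0 => simp [bb, g1]; ring
  | (t+1) =>
    rcases eq_or_lt_of_le hk with he | hlt
    · -- k = n+2 : central binomial case
      have ht : t = n + 1 := by omega
      subst ht
      have e1 : (n+2).choose (n+1+1) = 1 := by
        rw [show n+1+1 = n+2 by omega]; exact Nat.choose_self _
      have e2 : (n+1).choose (n+1+1) = 0 := Nat.choose_eq_zero_of_lt (by omega)
      have e3 : n.choose (n+1+1) = 0 := Nat.choose_eq_zero_of_lt (by omega)
      have e4 : (n+1).choose (n+1+1) = 0 := Nat.choose_eq_zero_of_lt (by omega)
      simp only [bb, g1, e1, e2, e3, e4]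
      push_cast
      qify
      have h := X4q (n+1)
      rw [show 2*(n+1)+2 = n+2+(n+1+1) by omega, show 2*(n+1) = n+1+(n+1) by omega] at h
      simp only [Nat.choose_self, Nat.cast_one] at h ⊢
      push_cast at h ⊢
      linear_combination h
    · -- main case t ≤ n
      have ht : t ≤ n := by omega
      qify
      simp only [bb, g1]
      push_cast
      have d1 : ((n:ℚ) + 1 - t) ≠ 0 := by
        have : (t:ℚ) ≤ n := by exact_mod_cast ht
        intro hc; nlinarith
      have d2 : ((n:ℚ) + 1) ≠ 0 := by positivity
      have d3 : ((n:ℚ) + 2) ≠ 0 := by positivity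
      have d4 : ((n:ℚ) + t + 2) ≠ 0 := by positivity
      set X : ℚ := ((n+1).choose (t+1) : ℚ) with hX
      set Y : ℚ := ((n+t+2).choose (t+1) : ℚ) with hY
      -- eA : C(n+2,t+1) = (n+2)X/(n+1-t)
      have eA : ((n+2).choose (t+1) : ℚ) = ((n:ℚ)+2) * X / ((n:ℚ)+1-t) := by
        rw [eq_div_iff d1]
        have h := X1q (n+1) (t+1)
        rw [show n+1+1 = n+2 by omega] at h
        push_cast at h; linarith
      have eB : (n.choose (t+1) : ℚ) = ((n:ℚ)-t) * X / ((n:ℚ)+1) := by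
        rw [eq_div_iff d2]
        have h := X1q n (t+1)
        push_cast at h; linarith
      have eF : ((n+2+(t+1)).choose (t+1) : ℚ) = ((n:ℚ)+t+3) * Y / ((n:ℚ)+2) := by
        rw [eq_div_iff d3]
        have h := X1q (n+t+2) (t+1)
        rw [show n+t+2+1 = n+2+(t+1) by omega] at h
        have h2 : ((n+t+2).choose (t+1) : ℚ) = Y := by rw [hY]
        push_cast at h; push_cast [h2] at h ⊢; linarith
      have eD : ((n+(t+1)).choose (t+1) : ℚ) = ((n:ℚ)+1) * Y / ((n:ℚ)+t+2) := by
        rw [eq_div_iff d4]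
        have h := X1q (n+t+1) (t+1)
        rw [show n+t+1+1 = n+t+2 by omega, show n+t+1 = n+(t+1) by omega] at h
        push_cast at h ⊢; linarith
      have eU : ((n+1).choose t : ℚ) = ((t:ℚ)+1) * X / ((n:ℚ)+1-t) := by
        rw [eq_div_iff d1]
        have h := X3q (n+1) t
        push_cast at h ⊢; linarith
      have eV : ((n+1+t).choose t : ℚ) = ((t:ℚ)+1) * Y / ((n:ℚ)+t+2) := by
        rw [eq_div_iff d4]
        have h6 := X3q (n+t+1) t
        have h4 := X1q (n+t+1) (t+1)
        rw [show n+t+1+1 = n+t+2 by omega] at h4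
        rw [show n+t+1 = n+1+t by omega] at h6 h4
        push_cast at h6 h4 ⊢
        have hcancel : ((n:ℚ)+1) * (((n:ℚ)+t+2) * ((n+1+t).choose t : ℚ)) = ((n:ℚ)+1) * (((t:ℚ)+1) * Y) := by
          linear_combination (-((t:ℚ)+1)) * h4 - ((n:ℚ)+t+2) * h6
        have := mul_left_cancel₀ d2 hcancel
        linarith
      have eC : ((n+1+(t+1)).choose (t+1) : ℚ) = Y := by
        rw [show n+1+(t+1) = n+t+2 by omega, hY]
      rw [eA, eB, eF, eD, eU, eV, eC]
      field_simp
      ring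
lemma drec (n : ℕ) : ((n:ℤ)+2) * D (n+2) = 3*(2*(n:ℤ)+3) * D (n+1) - ((n:ℤ)+1) * D n := by
  have tele : ∑ k ∈ range (n+3), (g1 n (k+1) - g1 n k) = g1 n (n+3) - g1 n 0 :=
    Finset.sum_range_sub _ _
  have hend : g1 n (n+3) = 0 := by
    show -2*(2*(n:ℤ)+3) * ((n+1).choose (n+2) : ℤ) * _ = 0
    rw [Nat.choose_eq_zero_of_lt (by omega)]; simp
  have hsum : ∑ k ∈ range (n+3),
      (((n:ℤ)+2) * bb (n+2) k - 3*(2*(n:ℤ)+3) * bb (n+1) k + ((n:ℤ)+1) * bb n k) = 0 := by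
    rw [Finset.sum_congr rfl (fun k hk => tw1 n k (by simp only [mem_range] at hk; omega))]
    rw [tele, hend]; simp [g1]
  have e2 : ∑ k ∈ range (n+3), bb (n+2) k = D (n+2) := Dext _ _ (by omega)
  have e1 : ∑ k ∈ range (n+3), bb (n+1) k = D (n+1) := Dext _ _ (by omega)
  have e0 : ∑ k ∈ range (n+3), bb n k = D n := Dext _ _ (by omega)
  simp only [Finset.sum_add_distrib, Finset.sum_sub_distrib, ← Finset.mul_sum, e0, e1, e2] at hsum
  linarith
lemma starR (n : ℕ) : Rr (n+1) + Rr n = 3*(2*(n:ℤ)+1) * E n := by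
  have h1 : Rr (n+1) = 3 * ∑ j ∈ range (n+1), ((n:ℤ)+1+j) * aa n j := by
    rw [Rr]
    congr 1
    refine Finset.sum_congr rfl (fun j hj => ?_)
    simp only [mem_range] at hj
    have h := X1 (n+j) (2*j)
    rw [show n+j+1 = n+1+j by omega] at h
    simp only [aa]
    push_cast at h ⊢
    have harg : ((n:ℤ)+j+1-2*j) = (n:ℤ)+1-j := by ring
    rw [harg] at h
    linear_combination (((2*j).choose j : ℤ)^2 * 2^j) * h
  have h2 : Rr n = 3 * ∑ j ∈ range (n+1), ((n:ℤ)-j) * aa n j := by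
    rw [Rr, Finset.sum_range_succ]
    simp
  have key : ∑ j ∈ range (n+1), ((n:ℤ)+1+j) * aa n j + ∑ j ∈ range (n+1), ((n:ℤ)-j) * aa n j
      = (2*(n:ℤ)+1) * ∑ j ∈ range (n+1), aa n j := by
    rw [← Finset.sum_add_distrib, Finset.mul_sum]
    exact Finset.sum_congr rfl (fun j _ => by ring)
  rw [h1, h2, E]
  linear_combination 3 * key
def g2 (n : ℕ) : ℕ → ℤ
  | 0 => 0
  | (j+1) => -2*(2*(n:ℤ)+3)*((j:ℤ)+1) * ((n+1+j).choose (2*j) : ℤ) * ((2*j).choose j : ℤ)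
      * ((2*j+2).choose (j+1) : ℤ) * 2^(j+1)
lemma tw2 (n j : ℕ) (hj : j ≤ n + 2) :
    ((n:ℤ)+2)^2 * aa (n+2) j - 9*(2*(n:ℤ)+3)^2 * aa (n+1) j - ((n:ℤ)+1)^2 * aa n j
      + 18*(2*(n:ℤ)+3) * (((n:ℤ)+1-j) * aa (n+1) j) = g2 n (j+1) - g2 n j := by
  match j with
  | 0 =>
    have h2 : (2).choose 1 = 2 := by decide
    simp [aa, g2, h2]
    ring
  | (i+1) =>
    rcases eq_or_lt_of_le hj with he | hlt
    · -- j = n + 2 : central binomial case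
      have hi : i = n + 1 := by omega
      subst hi
      have z1 : aa (n+1) (n+1+1) = 0 := by
        simp [aa, Nat.choose_eq_zero_of_lt (show n+1+(n+1+1) < 2*(n+1+1) by omega)]
      have z2 : aa n (n+1+1) = 0 := by
        simp [aa, Nat.choose_eq_zero_of_lt (show n+(n+1+1) < 2*(n+1+1) by omega)]
      have z3 : g2 n (n+1+1+1) = 0 := by
        show -2*(2*(n:ℤ)+3)*_ * ((n+1+(n+1+1)).choose (2*(n+1+1)) : ℤ) * _ * _ * _ = 0
        rw [Nat.choose_eq_zero_of_lt (by omega)]; ring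
      rw [z1, z2, z3]
      show ((n:ℤ)+2)^2 * aa (n+2) (n+2) - 9*(2*(n:ℤ)+3)^2 * 0 - ((n:ℤ)+1)^2 * 0
        + 18*(2*(n:ℤ)+3) * (((n:ℤ)+1-((n:ℕ)+2:ℕ)) * 0) = 0 - g2 n (n+2)
      simp only [aa, g2, mul_zero, sub_zero, zero_sub]
      rw [show n+2+(n+2) = 2*(n+2) by omega, Nat.choose_self,
          show n+1+(n+1) = 2*(n+1) by omega, show 2*(n+1)+2 = 2*(n+2) by omega]
      qify
      have h := X4q (n+1)
      rw [show 2*(n+1)+2 = 2*(n+2) by omega] at h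
      rw [show n+1+1 = n+2 by omega] at h
      rw [Nat.choose_self, show n+1+1 = n+2 by omega]
      push_cast at h ⊢
      linear_combination ((n:ℚ)+2) * (((2*(n+2)).choose (n+2) : ℚ)) * 2^(n+2) * h
    · -- main case i ≤ n
      have hi : i ≤ n := by omega
      qify
      simp only [aa, g2]
      rw [show n+2+(i+1) = n+i+3 by omega, show n+1+(i+1) = n+i+2 by omega,
          show n+(i+1) = n+i+1 by omega, show 2*(i+1) = 2*i+2 by omega,
          show i+1+1 = i+2 by omega]
      rw [show 2*i+2+2 = 2*i+4 by omega]
      push_cast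
      have hiq : (i:ℚ) ≤ n := by exact_mod_cast hi
      have d1 : ((n:ℚ) + 1 - i) ≠ 0 := by intro hc; nlinarith
      have d4 : ((n:ℚ) + i + 2) ≠ 0 := by positivity
      have d5 : ((2*i:ℚ) + 1) ≠ 0 := by positivity
      have d6 : ((i:ℚ) + 2) ≠ 0 := by positivity
      set X : ℚ := ((n+i+2).choose (2*i+2) : ℚ) with hX
      set c' : ℚ := ((2*i+2).choose (i+1) : ℚ) with hc'
      have eP1 : ((n+i+3).choose (2*i+2) : ℚ) = ((n:ℚ)+i+3) * X / ((n:ℚ)+1-i) := by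
        rw [eq_div_iff d1]
        have h := X1q (n+i+2) (2*i+2)
        rw [show n+i+2+1 = n+i+3 by omega] at h
        push_cast at h ⊢; linarith
      have eP2 : ((n+i+1).choose (2*i+2) : ℚ) = ((n:ℚ)-i) * X / ((n:ℚ)+i+2) := by
        rw [eq_div_iff d4]
        have h := X1q (n+i+1) (2*i+2)
        rw [show n+i+1+1 = n+i+2 by omega] at h
        push_cast at h ⊢; linarith
      have eP3 : ((n+1+i).choose (2*i) : ℚ)
          = (2*(i:ℚ)+2)*(2*(i:ℚ)+1) * X / (((n:ℚ)+i+2) * ((n:ℚ)+1-i)) := by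
        rw [eq_div_iff (mul_ne_zero d4 d1)]
        have s1 := X2q (n+i+1) (2*i+1)
        rw [show n+i+1+1 = n+i+2 by omega, show 2*i+1+1 = 2*i+2 by omega] at s1
        have s2 := X3q (n+i+1) (2*i)
        rw [show n+1+i = n+i+1 by omega]
        push_cast at s1 s2 ⊢
        linear_combination ((2*(i:ℚ)+1)) * s1 - ((n:ℚ)+i+2) * s2
      have eP4 : ((2*i).choose i : ℚ) = ((i:ℚ)+1) * c' / (2*(2*(i:ℚ)+1)) := by
        rw [eq_div_iff (by positivity)]
        have h := X4q i
        push_cast at h ⊢; linarith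
      have eP5 : ((2*i+4).choose (i+2) : ℚ) = 2*(2*(i:ℚ)+3) * c' / ((i:ℚ)+2) := by
        rw [eq_div_iff d6]
        have h := X4q (i+1)
        rw [show 2*(i+1)+2 = 2*i+4 by omega, show 2*(i+1) = 2*i+2 by omega] at h
        push_cast at h ⊢; linarith
      rw [eP1, eP2, eP3, eP4, eP5]
      field_simp
      ring
lemma crec (n : ℕ) : ((n:ℤ)+2)^2 * E (n+2)
    = 9*(2*(n:ℤ)+3)^2 * E (n+1) + ((n:ℤ)+1)^2 * E n - 6*(2*(n:ℤ)+3) * Rr (n+1) := by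
  have tele : ∑ j ∈ range (n+3), (g2 n (j+1) - g2 n j) = g2 n (n+3) - g2 n 0 :=
    Finset.sum_range_sub _ _
  have hend : g2 n (n+3) = 0 := by
    show -2*(2*(n:ℤ)+3)*_ * ((n+1+(n+2)).choose (2*(n+2)) : ℤ) * _ * _ * _ = 0
    rw [Nat.choose_eq_zero_of_lt (by omega)]; ring
  have hsum : ∑ j ∈ range (n+3),
      (((n:ℤ)+2)^2 * aa (n+2) j - 9*(2*(n:ℤ)+3)^2 * aa (n+1) j - ((n:ℤ)+1)^2 * aa n j
        + 18*(2*(n:ℤ)+3) * (((n:ℤ)+1-j) * aa (n+1) j)) = 0 := by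
    rw [Finset.sum_congr rfl (fun j hj => tw2 n j (by simp only [mem_range] at hj; omega))]
    rw [tele, hend]; simp [g2]
  have e2 : ∑ j ∈ range (n+3), aa (n+2) j = E (n+2) := Eext _ _ (by omega)
  have e1 : ∑ j ∈ range (n+3), aa (n+1) j = E (n+1) := Eext _ _ (by omega)
  have e0 : ∑ j ∈ range (n+3), aa n j = E n := Eext _ _ (by omega)
  have hT : ∑ j ∈ range (n+3), ((n:ℤ)+1-j) * aa (n+1) j
      = ∑ j ∈ range (n+1), ((n:ℤ)+1-j) * aa (n+1) j := by
    refine (Finset.sum_subset (Finset.range_subset_range.mpr (by omega)) ?_).symm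
    intro j hj1 hj2
    simp only [mem_range, not_lt] at hj1 hj2
    rcases (by omega : j = n+1 ∨ j = n+2) with h | h <;> subst h
    · have hz : ((n:ℤ)+1-(((n+1):ℕ):ℤ)) = 0 := by push_cast; ring
      rw [hz, zero_mul]
    · rw [aa_zero (n+1) (n+2) (by omega)]; ring
  have hR2 : Rr (n+1) = 3 * ∑ j ∈ range (n+1), ((n:ℤ)+1-j) * aa (n+1) j := by
    have hcongr : ∀ j ∈ range (n+1), (((n+1:ℕ):ℤ) - j) * aa (n+1) j
        = ((n:ℤ)+1-j) * aa (n+1) j := fun j _ => by push_cast; ring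
    rw [Rr, Finset.sum_congr rfl hcongr]
  simp only [Finset.sum_add_distrib, Finset.sum_sub_distrib, ← Finset.mul_sum,
    e0, e1, e2, hT] at hsum
  linear_combination hsum + 6*(2*(n:ℤ)+3) * hR2

-- main induction
theorem key (n : ℕ) : (D n)^2 = E n ∧ (D (n+1))^2 = E (n+1)
    ∧ ((n:ℤ)+1) * D (n+1) * D n = Rr (n+1) := by
  induction n with
  | zero =>
    refine ⟨?_, ?_, ?_⟩ <;>
      norm_num [D, E, Rr, aa, Finset.sum_range_succ, Finset.sum_range_zero]
  | succ n ih =>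
    obtain ⟨P0, P1, Q1⟩ := ih
    have hQ2 : ((n:ℤ)+2) * D (n+2) * D (n+1) = Rr (n+2) := by
      have hs := starR (n+1)
      push_cast at hs
      linear_combination D (n+1) * drec n + 3*(2*(n:ℤ)+3) * P1 - Q1 - hs
    have hP2 : (D (n+2))^2 = E (n+2) := by
      have hc := crec n
      have hmul : ((n:ℤ)+2)^2 * (D (n+2))^2 = ((n:ℤ)+2)^2 * E (n+2) := by
        linear_combination (((n:ℤ)+2) * D (n+2) + 3*(2*(n:ℤ)+3) * D (n+1) - ((n:ℤ)+1) * D n) * drec n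
          + 9*(2*(n:ℤ)+3)^2 * P1 + ((n:ℤ)+1)^2 * P0 - 6*(2*(n:ℤ)+3) * Q1 - hc
      exact mul_left_cancel₀ (by positivity) hmul
    refine ⟨P1, hP2, ?_⟩
    push_cast
    linear_combination hQ2

theorem stmt11 (n : ℕ) (hn : 0 < n) :
    (n : ℤ) * D n * D (n - 1)
      = 3 * ∑ j ∈ Finset.range n, ((n : ℤ) - j) * ((n + j).choose (2 * j) : ℤ)
          * ((2 * j).choose j : ℤ) ^ 2 * 2 ^ j := by
  obtain ⟨m, rfl⟩ : ∃ m, n = m + 1 := ⟨n - 1, by omega⟩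
  have h := (key m).2.2
  have hr : Rr (m+1) = 3 * ∑ j ∈ Finset.range (m+1), (((m:ℤ)+1) - j)
      * (((m+1) + j).choose (2 * j) : ℤ) * ((2 * j).choose j : ℤ) ^ 2 * 2 ^ j := by
    rw [Rr, Finset.mul_sum, Finset.mul_sum]
    refine Finset.sum_congr rfl (fun j _ => ?_)
    simp only [aa]
    push_cast
    ring
  rw [show m+1-1 = m by omega]
  push_cast
  rw [hr] at h
  -- (cast already normalized)
  linarith [h]
end

section
/- For every positive integer n, (2/(3n(n+1))) ∑_{k=1}^n (−1)^{n−k} k^2 D_k D_{k−1} = ∑_{j=0}^{n−1} C(2j,j) C(n+j+1,j) C(n−1,j) 2^j. -/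
open Finset


def c (j : ℕ) : ℤ := ((2*j).choose j : ℤ) * 2^j
def A (n : ℕ) : ℤ := ∑ j ∈ Finset.range (n+1), c j * ((n+j).choose j : ℤ) * (n.choose j : ℤ)
def Bb (n : ℕ) : ℤ := ∑ j ∈ Finset.range (n+1), c j * ((n+j).choose j : ℤ) * ((n-1).choose j : ℤ)
def Sf (n : ℕ) : ℤ := ∑ j ∈ Finset.range n, c j * ((n+j+1).choose j : ℤ) * ((n-1).choose j : ℤ)

lemma zc1 (a b : ℕ) : ((a+1).choose b : ℤ) * ((a:ℤ) + 1 - b) = (a.choose b : ℤ) * ((a:ℤ)+1) := by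
  rcases le_or_gt b (a+1) with h | h
  · have := Nat.choose_mul_succ_eq a b
    have h2 : ((a + 1 - b : ℕ) : ℤ) = (a:ℤ) + 1 - b := by omega
    calc ((a+1).choose b : ℤ) * ((a:ℤ) + 1 - b)
        = ((a+1).choose b : ℤ) * ((a + 1 - b : ℕ) : ℤ) := by rw [h2]
      _ = ((a.choose b) * (a+1) : ℕ) := by exact_mod_cast (this.symm)
      _ = (a.choose b : ℤ) * ((a:ℤ)+1) := by push_cast; ring
  · rw [Nat.choose_eq_zero_of_lt h, Nat.choose_eq_zero_of_lt (by omega)]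
    simp

lemma zc2 (a b : ℕ) : ((a:ℤ)+1) * (a.choose b : ℤ) = ((a+1).choose (b+1) : ℤ) * ((b:ℤ)+1) := by
  have := Nat.add_one_mul_choose_eq a b
  exact_mod_cast congrArg (Nat.cast : ℕ → ℤ) this

lemma zc3 (a b : ℕ) : (a.choose (b+1) : ℤ) * ((b:ℤ)+1) = (a.choose b : ℤ) * ((a:ℤ) - b) := by
  rcases le_or_gt b a with h | h
  · have := Nat.choose_succ_right_eq a b
    have h2 : ((a - b : ℕ) : ℤ) = (a:ℤ) - b := by omega
    calc (a.choose (b+1) : ℤ) * ((b:ℤ)+1) = ((a.choose (b+1)) * (b+1) : ℕ) := by push_cast; ring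
      _ = ((a.choose b) * (a - b) : ℕ) := by exact_mod_cast this
      _ = (a.choose b : ℤ) * ((a:ℤ) - b) := by push_cast [h2]; ring
  · rw [Nat.choose_eq_zero_of_lt h, Nat.choose_eq_zero_of_lt (by omega)]
    simp

lemma zc4 (n j : ℕ) : (n:ℤ) * ((n-1).choose j : ℤ) = ((n:ℤ) - j) * (n.choose j : ℤ) := by
  cases n with
  | zero => cases j <;> simp
  | succ m =>
    have h := zc1 m j
    simp only [Nat.add_sub_cancel]
    push_cast at h ⊢
    linarith

lemma qc1 (a b : ℕ) : ((a+1).choose b : ℚ) * ((a:ℚ) + 1 - b) = (a.choose b : ℚ) * ((a:ℚ)+1) := by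
  exact_mod_cast congrArg (Int.cast : ℤ → ℚ) (zc1 a b)

lemma qc2 (a b : ℕ) : ((a:ℚ)+1) * (a.choose b : ℚ) = ((a+1).choose (b+1) : ℚ) * ((b:ℚ)+1) := by
  exact_mod_cast congrArg (Int.cast : ℤ → ℚ) (zc2 a b)

lemma qc3 (a b : ℕ) : (a.choose (b+1) : ℚ) * ((b:ℚ)+1) = (a.choose b : ℚ) * ((a:ℚ) - b) := by
  exact_mod_cast congrArg (Int.cast : ℤ → ℚ) (zc3 a b)

lemma tD (m k : ℕ) :
    ((m:ℤ)+2)*((m:ℤ)+1) * ( ((m:ℤ)+2) * ((m+2).choose k : ℤ) * ((m+2+k).choose k : ℤ)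
      - 3*(2*(m:ℤ)+3) * ((m+1).choose k : ℤ) * ((m+1+k).choose k : ℤ)
      + ((m:ℤ)+1) * (m.choose k : ℤ) * ((m+k).choose k : ℤ) )
    = (-2*(2*(m:ℤ)+3) * ((k:ℤ)+1)^2 * ((m+2).choose (k+1) : ℤ) * ((m+(k+1)).choose (k+1) : ℤ))
      - (-2*(2*(m:ℤ)+3) * ((k:ℤ))^2 * ((m+2).choose k : ℤ) * ((m+k).choose k : ℤ)) := by
  have key : ((m:ℚ)+2)*((m:ℚ)+1) * ( ((m:ℚ)+2) * ((m+2).choose k : ℚ) * ((m+2+k).choose k : ℚ)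
      - 3*(2*(m:ℚ)+3) * ((m+1).choose k : ℚ) * ((m+1+k).choose k : ℚ)
      + ((m:ℚ)+1) * (m.choose k : ℚ) * ((m+k).choose k : ℚ) )
    = (-2*(2*(m:ℚ)+3) * ((k:ℚ)+1)^2 * ((m+2).choose (k+1) : ℚ) * ((m+(k+1)).choose (k+1) : ℚ))
      - (-2*(2*(m:ℚ)+3) * ((k:ℚ))^2 * ((m+2).choose k : ℚ) * ((m+k).choose k : ℚ)) := by
    have hm1 : ((m:ℚ)+1) ≠ 0 := by positivity
    have hm2 : ((m:ℚ)+2) ≠ 0 := by positivity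
    have hk1 : ((k:ℚ)+1) ≠ 0 := by positivity
    -- C(m+1+k,k) = C(m+k,k)*(m+k+1)/(m+1)
    have hA1 : ((m+1+k).choose k : ℚ) = ((m+k).choose k : ℚ) * ((m:ℚ)+k+1) / ((m:ℚ)+1) := by
      rw [eq_div_iff hm1]
      have h := qc1 (m+k) k
      rw [show m+k+1 = m+1+k from by ring] at h
      push_cast at h
      linear_combination h
    -- C(m+2+k,k) = C(m+1+k,k)*(m+k+2)/(m+2)
    have hA2 : ((m+2+k).choose k : ℚ) = ((m+1+k).choose k : ℚ) * ((m:ℚ)+k+2) / ((m:ℚ)+2) := by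
      rw [eq_div_iff hm2]
      have h := qc1 (m+1+k) k
      rw [show m+1+k+1 = m+2+k from by ring] at h
      push_cast at h
      linear_combination h
    -- C(m+1,k) = C(m+2,k)*(m+2-k)/(m+2)
    have hB1 : ((m+1).choose k : ℚ) = ((m+2).choose k : ℚ) * ((m:ℚ)+2-k) / ((m:ℚ)+2) := by
      rw [eq_div_iff hm2]
      have h := qc1 (m+1) k
      rw [show m+1+1 = m+2 from by ring] at h
      push_cast at h
      linear_combination -h
    -- C(m,k) = C(m+1,k)*(m+1-k)/(m+1)
    have hB0 : ((m).choose k : ℚ) = ((m+1).choose k : ℚ) * ((m:ℚ)+1-k) / ((m:ℚ)+1) := by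
      rw [eq_div_iff hm1]
      have h := qc1 m k
      push_cast at h
      linear_combination -h
    -- C(m+2,k+1) = C(m+2,k)*(m+2-k)/(k+1)
    have hC1 : ((m+2).choose (k+1) : ℚ) = ((m+2).choose k : ℚ) * ((m:ℚ)+2-k) / ((k:ℚ)+1) := by
      rw [eq_div_iff hk1]
      have h := qc3 (m+2) k
      push_cast at h
      linear_combination h
    -- C(m+(k+1),k+1) = C(m+k,k)*(m+k+1)/(k+1)
    have hC2 : ((m+(k+1)).choose (k+1) : ℚ) = ((m+k).choose k : ℚ) * ((m:ℚ)+k+1) / ((k:ℚ)+1) := by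
      rw [eq_div_iff hk1]
      have h := qc2 (m+k) k
      rw [show m+k+1 = m+(k+1) from by ring] at h
      push_cast at h
      linear_combination -h
    rw [hA2, hC2, hC1, hB0, hB1, hA1]
    field_simp
    ring
  exact_mod_cast key

lemma sum_comb (N : ℕ) (f2 f1 f0 : ℕ → ℤ) (a b c : ℤ) :
    ∑ k ∈ Finset.range N, (a * f2 k - b * f1 k + c * f0 k)
      = a * ∑ k ∈ Finset.range N, f2 k - b * ∑ k ∈ Finset.range N, f1 k
        + c * ∑ k ∈ Finset.range N, f0 k := by
  rw [Finset.mul_sum, Finset.mul_sum, Finset.mul_sum, ← Finset.sum_sub_distrib,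
    ← Finset.sum_add_distrib]

lemma keyD2 (m : ℕ) : ((m:ℤ)+2) * D (m+2) = 3*(2*(m:ℤ)+3) * D (m+1) - ((m:ℤ)+1) * D m := by
  have hD2 : ∑ k ∈ Finset.range (m+3), ((m+2).choose k : ℤ) * ((m+2+k).choose k : ℤ) = D (m+2) := rfl
  have hD1 : ∑ k ∈ Finset.range (m+3), ((m+1).choose k : ℤ) * ((m+1+k).choose k : ℤ) = D (m+1) := by
    rw [show m+3 = (m+2)+1 from rfl, Finset.sum_range_succ]
    rw [Nat.choose_eq_zero_of_lt (by omega : m+1 < m+2)]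
    simp [D]
  have hD0 : ∑ k ∈ Finset.range (m+3), ((m).choose k : ℤ) * ((m+k).choose k : ℤ) = D m := by
    rw [show m+3 = (m+2)+1 from rfl, Finset.sum_range_succ, Finset.sum_range_succ]
    rw [Nat.choose_eq_zero_of_lt (by omega : m < m+2), Nat.choose_eq_zero_of_lt (by omega : m < m+1)]
    simp [D]
  set g : ℕ → ℤ := fun k =>
    -2*(2*(m:ℤ)+3) * ((k:ℤ))^2 * ((m+2).choose k : ℤ) * ((m+k).choose k : ℤ) with hg
  have tele : ∑ k ∈ Finset.range (m+3), (g (k+1) - g k) = g (m+3) - g 0 :=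
    Finset.sum_range_sub g (m+3)
  have gtop : g (m+3) = 0 := by
    simp only [hg]
    rw [Nat.choose_eq_zero_of_lt (by omega : m+2 < m+3)]
    ring
  have gzero : g 0 = 0 := by simp [hg]
  have main : (((m:ℤ)+2)*((m:ℤ)+1)*((m:ℤ)+2)) * ∑ k ∈ Finset.range (m+3), ((m+2).choose k : ℤ) * ((m+2+k).choose k : ℤ)
      - (((m:ℤ)+2)*((m:ℤ)+1)*(3*(2*(m:ℤ)+3))) * ∑ k ∈ Finset.range (m+3), ((m+1).choose k : ℤ) * ((m+1+k).choose k : ℤ)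
      + (((m:ℤ)+2)*((m:ℤ)+1)*((m:ℤ)+1)) * ∑ k ∈ Finset.range (m+3), ((m).choose k : ℤ) * ((m+k).choose k : ℤ) = 0 := by
    rw [← sum_comb]
    calc ∑ k ∈ Finset.range (m+3), ((((m:ℤ)+2)*((m:ℤ)+1)*((m:ℤ)+2)) * (((m+2).choose k : ℤ) * ((m+2+k).choose k : ℤ))
        - (((m:ℤ)+2)*((m:ℤ)+1)*(3*(2*(m:ℤ)+3))) * (((m+1).choose k : ℤ) * ((m+1+k).choose k : ℤ))
        + (((m:ℤ)+2)*((m:ℤ)+1)*((m:ℤ)+1)) * (((m).choose k : ℤ) * ((m+k).choose k : ℤ)))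
        = ∑ k ∈ Finset.range (m+3), (g (k+1) - g k) := by
          refine Finset.sum_congr rfl fun k _ => ?_
          have h := tD m k
          simp only [hg]
          push_cast
          linear_combination h
      _ = 0 := by rw [tele, gtop, gzero]; ring
  rw [hD2, hD1, hD0] at main
  have hfac : (((m:ℤ)+2)*((m:ℤ)+1)) ≠ 0 := by positivity
  have main2 : (((m:ℤ)+2)*((m:ℤ)+1)) * (((m:ℤ)+2) * D (m+2) - 3*(2*(m:ℤ)+3) * D (m+1) + ((m:ℤ)+1) * D m) = 0 := by
    linear_combination main
  have := (mul_eq_zero.mp main2).resolve_left hfac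
  linarith

lemma tE2 (m j : ℕ) :
    ((m:ℤ)+1) * ( ((m:ℤ)+2)^2 * (c j * ((m+2+j).choose j : ℤ) * ((m+2).choose j : ℤ))
      - 9*(2*(m:ℤ)+3)^2 * (c j * ((m+1+j).choose j : ℤ) * ((m+1).choose j : ℤ))
      + 18*((m:ℤ)+1)*(2*(m:ℤ)+3) * (c j * ((m+1+j).choose j : ℤ) * ((m).choose j : ℤ))
      - ((m:ℤ)+1)^2 * (c j * ((m+j).choose j : ℤ) * ((m).choose j : ℤ)) )
    = (-2*(2*(m:ℤ)+3)*((j:ℤ)+1)^2 * c (j+1) * ((m+(j+1)).choose (j+1) : ℤ) * ((m+1).choose j : ℤ))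
      - (-2*(2*(m:ℤ)+3)*((j:ℤ))^2 * c j * ((m+j).choose j : ℤ) * ((m+1).choose (j-1) : ℤ)) := by
  cases j with
  | zero =>
    simp only [c]
    norm_num [Nat.choose_one_right]
    push_cast
    ring
  | succ i =>
    simp only [c, Nat.add_sub_cancel]
    rw [show m+2+(i+1) = m+i+3 from by ring, show m+1+(i+1) = m+i+2 from by ring,
      show m+(i+1) = m+i+1 from by ring, show m+(i+1+1) = m+i+2 from by ring,
      show i+1+1 = i+2 from by ring, show 2*(i+1) = 2*i+2 from by ring,
      show 2*(i+2) = 2*i+4 from by ring]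
    have key : ((m:ℚ)+1) * ( ((m:ℚ)+2)^2 * (((2*i+2).choose (i+1) : ℚ) * 2^(i+1) * ((m+i+3).choose (i+1) : ℚ) * ((m+2).choose (i+1) : ℚ))
        - 9*(2*(m:ℚ)+3)^2 * (((2*i+2).choose (i+1) : ℚ) * 2^(i+1) * ((m+i+2).choose (i+1) : ℚ) * ((m+1).choose (i+1) : ℚ))
        + 18*((m:ℚ)+1)*(2*(m:ℚ)+3) * (((2*i+2).choose (i+1) : ℚ) * 2^(i+1) * ((m+i+2).choose (i+1) : ℚ) * ((m).choose (i+1) : ℚ))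
        - ((m:ℚ)+1)^2 * (((2*i+2).choose (i+1) : ℚ) * 2^(i+1) * ((m+i+1).choose (i+1) : ℚ) * ((m).choose (i+1) : ℚ)) )
      = (-2*(2*(m:ℚ)+3)*((i:ℚ)+2)^2 * (((2*i+4).choose (i+2) : ℚ) * 2^(i+2)) * ((m+i+2).choose (i+2) : ℚ) * ((m+1).choose (i+1) : ℚ))
        - (-2*(2*(m:ℚ)+3)*((i:ℚ)+1)^2 * (((2*i+2).choose (i+1) : ℚ) * 2^(i+1)) * ((m+i+1).choose (i+1) : ℚ) * ((m+1).choose i : ℚ)) := by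
      have hm1 : ((m:ℚ)+1) ≠ 0 := by positivity
      have hm2 : ((m:ℚ)+2) ≠ 0 := by positivity
      have hi1 : ((i:ℚ)+1) ≠ 0 := by positivity
      have hi2 : ((i:ℚ)+2) ≠ 0 := by positivity
      have hx2 : ((m+i+2).choose (i+1) : ℚ) = ((m+i+1).choose (i+1) : ℚ) * ((m:ℚ)+i+2) / ((m:ℚ)+1) := by
        rw [eq_div_iff hm1]
        have h := qc1 (m+i+1) (i+1)
        rw [show m+i+1+1 = m+i+2 from by ring] at h
        push_cast at h; linear_combination h
      have hx3 : ((m+i+3).choose (i+1) : ℚ) = ((m+i+2).choose (i+1) : ℚ) * ((m:ℚ)+i+3) / ((m:ℚ)+2) := by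
        rw [eq_div_iff hm2]
        have h := qc1 (m+i+2) (i+1)
        rw [show m+i+2+1 = m+i+3 from by ring] at h
        push_cast at h; linear_combination h
      have hx4 : ((m+i+2).choose (i+2) : ℚ) = ((m+i+1).choose (i+1) : ℚ) * ((m:ℚ)+i+2) / ((i:ℚ)+2) := by
        rw [eq_div_iff hi2]
        have h := qc2 (m+i+1) (i+1)
        rw [show m+i+1+1 = m+i+2 from by ring, show i+1+1 = i+2 from by ring] at h
        push_cast at h; linear_combination -h
      have hy1 : ((m+1).choose (i+1) : ℚ) = ((m+1).choose i : ℚ) * ((m:ℚ)+1-i) / ((i:ℚ)+1) := by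
        rw [eq_div_iff hi1]
        have h := qc3 (m+1) i
        push_cast at h; linear_combination h
      have hy2 : ((m+2).choose (i+1) : ℚ) = ((m+1).choose i : ℚ) * ((m:ℚ)+2) / ((i:ℚ)+1) := by
        rw [eq_div_iff hi1]
        have h := qc2 (m+1) i
        rw [show m+1+1 = m+2 from by ring] at h
        push_cast at h; linear_combination -h
      have hy0 : ((m).choose (i+1) : ℚ) = ((m+1).choose (i+1) : ℚ) * ((m:ℚ)-i) / ((m:ℚ)+1) := by
        rw [eq_div_iff hm1]
        have h := qc1 m (i+1)
        push_cast at h; linear_combination -h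
      have hw : ((2*i+3).choose (i+2) : ℚ) = ((2*i+2).choose (i+1) : ℚ) * (2*(i:ℚ)+3) / ((i:ℚ)+2) := by
        rw [eq_div_iff hi2]
        have h := qc2 (2*i+2) (i+1)
        rw [show 2*i+2+1 = 2*i+3 from by ring, show i+1+1 = i+2 from by ring] at h
        push_cast at h; linear_combination -h
      have hz2 : ((2*i+4).choose (i+2) : ℚ) = ((2*i+3).choose (i+2) : ℚ) * (2*(i:ℚ)+4) / ((i:ℚ)+2) := by
        rw [eq_div_iff hi2]
        have h := qc1 (2*i+3) (i+2)
        rw [show 2*i+3+1 = 2*i+4 from by ring] at h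
        push_cast at h; linear_combination h
      rw [hx3, hx4, hz2, hw, hy2, hy0, hy1, hx2]
      field_simp
      ring
    exact_mod_cast key

lemma sum_comb4 (N : ℕ) (f3 f2 f1 f0 : ℕ → ℤ) (a b cc d : ℤ) :
    ∑ k ∈ Finset.range N, (a * f3 k - b * f2 k + cc * f1 k - d * f0 k)
      = a * ∑ k ∈ Finset.range N, f3 k - b * ∑ k ∈ Finset.range N, f2 k
        + cc * ∑ k ∈ Finset.range N, f1 k - d * ∑ k ∈ Finset.range N, f0 k := by
  rw [Finset.mul_sum, Finset.mul_sum, Finset.mul_sum, Finset.mul_sum,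
    ← Finset.sum_sub_distrib, ← Finset.sum_add_distrib, ← Finset.sum_sub_distrib]

lemma keyE2 (m : ℕ) : ((m:ℤ)+2)^2 * A (m+2)
    = 9*(2*(m:ℤ)+3)^2 * A (m+1) - 18*((m:ℤ)+1)*(2*(m:ℤ)+3) * Bb (m+1) + ((m:ℤ)+1)^2 * A m := by
  have hA2 : ∑ j ∈ Finset.range (m+3), c j * ((m+2+j).choose j : ℤ) * ((m+2).choose j : ℤ) = A (m+2) := rfl
  have hA1 : ∑ j ∈ Finset.range (m+3), c j * ((m+1+j).choose j : ℤ) * ((m+1).choose j : ℤ) = A (m+1) := by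
    rw [show m+3 = (m+2)+1 from rfl, Finset.sum_range_succ]
    rw [Nat.choose_eq_zero_of_lt (by omega : m+1 < m+2)]
    simp [A]
  have hB1 : ∑ j ∈ Finset.range (m+3), c j * ((m+1+j).choose j : ℤ) * ((m).choose j : ℤ) = Bb (m+1) := by
    rw [show m+3 = (m+2)+1 from rfl, Finset.sum_range_succ]
    rw [Nat.choose_eq_zero_of_lt (by omega : m < m+2)]
    simp [Bb]
  have hA0 : ∑ j ∈ Finset.range (m+3), c j * ((m+j).choose j : ℤ) * ((m).choose j : ℤ) = A m := by
    rw [show m+3 = (m+2)+1 from rfl, Finset.sum_range_succ, Finset.sum_range_succ]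
    rw [Nat.choose_eq_zero_of_lt (by omega : m < m+2), Nat.choose_eq_zero_of_lt (by omega : m < m+1)]
    simp [A]
  set g : ℕ → ℤ := fun j =>
    -2*(2*(m:ℤ)+3)*((j:ℤ))^2 * c j * ((m+j).choose j : ℤ) * ((m+1).choose (j-1) : ℤ) with hg
  have tele : ∑ j ∈ Finset.range (m+3), (g (j+1) - g j) = g (m+3) - g 0 :=
    Finset.sum_range_sub g (m+3)
  have gtop : g (m+3) = 0 := by
    simp only [hg]
    rw [show m+3-1 = m+2 from rfl, Nat.choose_eq_zero_of_lt (by omega : m+1 < m+2)]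
    ring
  have gzero : g 0 = 0 := by norm_num [hg]
  have main : (((m:ℤ)+1)*((m:ℤ)+2)^2) * ∑ j ∈ Finset.range (m+3), c j * ((m+2+j).choose j : ℤ) * ((m+2).choose j : ℤ)
      - (((m:ℤ)+1)*(9*(2*(m:ℤ)+3)^2)) * ∑ j ∈ Finset.range (m+3), c j * ((m+1+j).choose j : ℤ) * ((m+1).choose j : ℤ)
      + (((m:ℤ)+1)*(18*((m:ℤ)+1)*(2*(m:ℤ)+3))) * ∑ j ∈ Finset.range (m+3), c j * ((m+1+j).choose j : ℤ) * ((m).choose j : ℤ)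
      - (((m:ℤ)+1)*((m:ℤ)+1)^2) * ∑ j ∈ Finset.range (m+3), c j * ((m+j).choose j : ℤ) * ((m).choose j : ℤ) = 0 := by
    rw [← sum_comb4]
    calc ∑ j ∈ Finset.range (m+3), ((((m:ℤ)+1)*((m:ℤ)+2)^2) * (c j * ((m+2+j).choose j : ℤ) * ((m+2).choose j : ℤ))
          - (((m:ℤ)+1)*(9*(2*(m:ℤ)+3)^2)) * (c j * ((m+1+j).choose j : ℤ) * ((m+1).choose j : ℤ))
          + (((m:ℤ)+1)*(18*((m:ℤ)+1)*(2*(m:ℤ)+3))) * (c j * ((m+1+j).choose j : ℤ) * ((m).choose j : ℤ))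
          - (((m:ℤ)+1)*((m:ℤ)+1)^2) * (c j * ((m+j).choose j : ℤ) * ((m).choose j : ℤ)))
        = ∑ j ∈ Finset.range (m+3), (g (j+1) - g j) := by
          refine Finset.sum_congr rfl fun j _ => ?_
          have h := tE2 m j
          simp only [hg, Nat.add_sub_cancel]
          push_cast
          linear_combination h
      _ = 0 := by rw [tele, gtop, gzero]; ring
  rw [hA2, hA1, hB1, hA0] at main
  have hfac : ((m:ℤ)+1) ≠ 0 := by positivity
  have main2 : ((m:ℤ)+1) * (((m:ℤ)+2)^2 * A (m+2) - 9*(2*(m:ℤ)+3)^2 * A (m+1)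
      + 18*((m:ℤ)+1)*(2*(m:ℤ)+3) * Bb (m+1) - ((m:ℤ)+1)^2 * A m) = 0 := by
    linear_combination main
  have := (mul_eq_zero.mp main2).resolve_left hfac
  linarith

lemma tR1 (m j : ℕ) :
    ((m:ℤ)+2) * (((m+2+j).choose j : ℤ) * ((m+1).choose j : ℤ))
      + ((m:ℤ)+1) * (((m+1+j).choose j : ℤ) * ((m).choose j : ℤ))
    = (2*(m:ℤ)+3) * (((m+1+j).choose j : ℤ) * ((m+1).choose j : ℤ)) := by
  have h1 : ((m:ℤ)+2) * ((m+2+j).choose j : ℤ) = ((m:ℤ)+j+2) * ((m+1+j).choose j : ℤ) := by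
    have h := zc1 (m+1+j) j
    rw [show m+1+j+1 = m+2+j from by ring] at h
    push_cast at h; linarith
  have h2 : ((m:ℤ)+1) * ((m).choose j : ℤ) = ((m:ℤ)+1-j) * ((m+1).choose j : ℤ) := by
    have h := zc4 (m+1) j
    simp only [Nat.add_sub_cancel] at h
    push_cast at h; linarith
  linear_combination ((m+1).choose j : ℤ) * h1 + ((m+1+j).choose j : ℤ) * h2

lemma keyR1 (m : ℕ) : ((m:ℤ)+2) * Bb (m+2) + ((m:ℤ)+1) * Bb (m+1) = (2*(m:ℤ)+3) * A (m+1) := by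
  have hB2 : ∑ j ∈ Finset.range (m+3), c j * ((m+2+j).choose j : ℤ) * ((m+1).choose j : ℤ) = Bb (m+2) := by
    simp [Bb]
  have hB1 : ∑ j ∈ Finset.range (m+3), c j * ((m+1+j).choose j : ℤ) * ((m).choose j : ℤ) = Bb (m+1) := by
    rw [show m+3 = (m+2)+1 from rfl, Finset.sum_range_succ]
    rw [Nat.choose_eq_zero_of_lt (by omega : m < m+2)]
    simp [Bb]
  have hA1 : ∑ j ∈ Finset.range (m+3), c j * ((m+1+j).choose j : ℤ) * ((m+1).choose j : ℤ) = A (m+1) := by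
    rw [show m+3 = (m+2)+1 from rfl, Finset.sum_range_succ]
    rw [Nat.choose_eq_zero_of_lt (by omega : m+1 < m+2)]
    simp [A]
  rw [← hB2, ← hB1, ← hA1, Finset.mul_sum, Finset.mul_sum, Finset.mul_sum,
    ← Finset.sum_add_distrib]
  refine Finset.sum_congr rfl fun j _ => ?_
  linear_combination (c j) * tR1 m j

lemma tS (n j : ℕ) :
    ((n:ℤ)+2) * (c j * ((n+j+2).choose j : ℤ) * ((n).choose j : ℤ))
      + (n:ℤ) * (c j * ((n+j+1).choose j : ℤ) * ((n-1).choose j : ℤ))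
    = 2*((n:ℤ)+1) * (c j * ((n+j+1).choose j : ℤ) * ((n).choose j : ℤ)) := by
  have h1 : ((n:ℤ)+2) * ((n+j+2).choose j : ℤ) = ((n:ℤ)+j+2) * ((n+j+1).choose j : ℤ) := by
    have h := zc1 (n+j+1) j
    rw [show n+j+1+1 = n+j+2 from by ring] at h
    push_cast at h; linarith
  linear_combination (c j) * (((n).choose j : ℤ) * h1 + ((n+j+1).choose j : ℤ) * zc4 n j)

lemma keyS (n : ℕ) : ((n:ℤ)+2) * Sf (n+1) + (n:ℤ) * Sf n = 2*((n:ℤ)+1) * Bb (n+1) := by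
  have h1 : Sf (n+1) = ∑ j ∈ Finset.range (n+1), c j * ((n+j+2).choose j : ℤ) * ((n).choose j : ℤ) := by
    simp only [Sf, Nat.add_sub_cancel]
    exact Finset.sum_congr rfl fun j _ => by rw [show n+1+j+1 = n+j+2 from by ring]
  have h2 : (n:ℤ) * Sf n
      = ∑ j ∈ Finset.range (n+1), (n:ℤ) * (c j * ((n+j+1).choose j : ℤ) * ((n-1).choose j : ℤ)) := by
    have htop : (n:ℤ) * (c n * ((n+n+1).choose n : ℤ) * ((n-1).choose n : ℤ)) = 0 := by
      cases n with
      | zero => push_cast; ring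
      | succ m =>
        rw [show m+1-1 = m from rfl, Nat.choose_eq_zero_of_lt (by omega : m < m+1)]
        push_cast; ring
    rw [Finset.sum_range_succ, htop, add_zero, ← Finset.mul_sum, Sf]
  have h3 : Bb (n+1) = ∑ j ∈ Finset.range (n+1), c j * ((n+j+1).choose j : ℤ) * ((n).choose j : ℤ) := by
    simp only [Bb, Nat.add_sub_cancel]
    rw [Finset.sum_range_succ, Nat.choose_eq_zero_of_lt (by omega : n < n+1)]
    simp only [Nat.cast_zero, mul_zero, add_zero]
    exact Finset.sum_congr rfl fun j _ => by rw [show n+1+j = n+j+1 from by ring]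
  rw [h1, h2, h3, Finset.mul_sum, Finset.mul_sum, ← Finset.sum_add_distrib]
  refine Finset.sum_congr rfl fun j _ => ?_
  linear_combination tS n j

lemma hD0v : D 0 = 1 := by norm_num [D]
lemma hD1v : D 1 = 3 := by norm_num [D, Finset.sum_range_succ]
lemma hA0v : A 0 = 1 := by norm_num [A, c]
lemma hA1v : A 1 = 9 := by norm_num [A, c, Finset.sum_range_succ]
lemma hBb1v : Bb 1 = 1 := by norm_num [Bb, c, Finset.sum_range_succ]

lemma AB (n : ℕ) : A n = D n ^ 2 ∧ A (n+1) = D (n+1) ^ 2 ∧ 3 * Bb (n+1) = D (n+1) * D n := by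
  induction n with
  | zero => refine ⟨?_, ?_, ?_⟩ <;> norm_num [hA0v, hA1v, hBb1v, hD0v, hD1v]
  | succ n ih =>
    obtain ⟨h0, h1, hB⟩ := ih
    have hd := keyD2 n
    have hE := keyE2 n
    have hR := keyR1 n
    have hA2 : A (n+2) = D (n+2)^2 := by
      have hc : ((n:ℤ)+2)^2 * A (n+2) = ((n:ℤ)+2)^2 * D (n+2)^2 := by
        linear_combination hE + 9*(2*(n:ℤ)+3)^2 * h1 - 6*((n:ℤ)+1)*(2*(n:ℤ)+3) * hB
          + ((n:ℤ)+1)^2 * h0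
          - (((n:ℤ)+2)*D (n+2) + 3*(2*(n:ℤ)+3)*D (n+1) - ((n:ℤ)+1)*D n) * hd
      exact mul_left_cancel₀ (by positivity) hc
    refine ⟨h1, ?_, ?_⟩
    · convert hA2 using 2 <;> push_cast <;> ring_nf
    · have hc : ((n:ℤ)+2) * (3 * Bb (n+2)) = ((n:ℤ)+2) * (D (n+2) * D (n+1)) := by
        linear_combination 3*hR - ((n:ℤ)+1)*hB + 3*(2*(n:ℤ)+3)*h1 - D (n+1) * hd
      have := mul_left_cancel₀ (by positivity : ((n:ℤ)+2) ≠ 0) hc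
      convert this using 2 <;> push_cast <;> ring_nf

theorem stmt14 (n : ℕ) (hn : 0 < n) :
    2 * ∑ k ∈ Finset.Icc 1 n, (-1 : ℤ) ^ (n - k) * k ^ 2 * D k * D (k - 1)
      = 3 * n * (n + 1) *
          ∑ j ∈ Finset.range n, ((2 * j).choose j : ℤ) * ((n + j + 1).choose j : ℤ)
            * ((n - 1).choose j : ℤ) * 2 ^ j := by
  have hSf : ∀ N : ℕ, (∑ j ∈ Finset.range N, ((2 * j).choose j : ℤ) * ((N + j + 1).choose j : ℤ)
      * ((N - 1).choose j : ℤ) * 2 ^ j) = Sf N := by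
    intro N
    simp only [Sf]
    exact Finset.sum_congr rfl fun j _ => by simp only [c]; ring
  rw [hSf n]
  induction n, hn using Nat.le_induction with
  | base =>
    rw [show Sf 1 = 1 from by norm_num [Sf, c]]
    rw [Finset.Icc_self, Finset.sum_singleton]
    norm_num [hD0v, hD1v]
  | succ n hn ih =>
    have hsplit : ∑ k ∈ Finset.Icc 1 (n+1), (-1 : ℤ) ^ (n+1-k) * k ^ 2 * D k * D (k - 1)
        = ((n:ℤ)+1)^2 * D (n+1) * D n
          - ∑ k ∈ Finset.Icc 1 n, (-1 : ℤ) ^ (n-k) * k ^ 2 * D k * D (k - 1) := by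
      rw [Finset.sum_Icc_succ_top (by omega)]
      have hc : ∀ k ∈ Finset.Icc 1 n, (-1 : ℤ) ^ (n+1-k) * k ^ 2 * D k * D (k - 1)
          = -((-1 : ℤ) ^ (n-k) * k ^ 2 * D k * D (k - 1)) := by
        intro k hk
        have hk' : k ≤ n := (Finset.mem_Icc.mp hk).2
        rw [show n+1-k = (n-k)+1 from by omega, pow_succ]
        ring
      rw [Finset.sum_congr rfl hc, Finset.sum_neg_distrib]
      rw [show n+1-(n+1) = 0 from by omega, show n+1-1 = n from by omega]
      push_cast
      ring
    have h3B := (AB n).2.2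
    have hkS := keyS n
    push_cast
    push_cast at ih hsplit
    linear_combination 2*hsplit - ih - 3*((n:ℤ)+1)*hkS - 2*((n:ℤ)+1)^2*h3B
end
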